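/- Let q, m₁, k₁ be positive integers with q ≥ 2, m₁ ≥ 2, 1 ≤ k₁ < m₁, and gcd(m₁, q − 1) = 1. Then there exist δ₁ > 0 and C > 0 such that for every real number a and every positive integer N, |∑_{0≤n<N} e(a n + (k₁/m₁) S_q(n))| ≤ C · N^{1−δ₁}. -/

import Mathlib

noncomputable section

/-- `e x = exp(2 π i x)`. -/
def e (x : ℝ) : ℂ := Complex.exp (2 * Real.pi * Complex.I * x)

/-- Sum of digits of `n` in base `q`. -/
def Sq (q n : ℕ) : ℕ := (Nat.digits q n).sum

lemma e_add (x y : ℝ) : e (x + y) = e x * e y := by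
  simp only [e, ← Complex.exp_add]; push_cast; ring_nf

lemma abs_e (x : ℝ) : ‖e x‖ = 1 := by
  have : (2 * Real.pi * Complex.I * x) = ((2 * Real.pi * x : ℝ) : ℂ) * Complex.I := by
    push_cast; ring
  rw [e, this, Complex.norm_exp_ofReal_mul_I]

lemma e_int (n : ℤ) : e n = 1 := by
  have : (2 * Real.pi * Complex.I * (n : ℝ)) = (n : ℂ) * (2 * Real.pi * Complex.I) := by
    push_cast; ring
  rw [e, this, Complex.exp_int_mul_two_pi_mul_I]

lemma e_eq_one {x : ℝ} (hx : e x = 1) : ∃ n : ℤ, x = n := by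
  rw [e, Complex.exp_eq_one_iff] at hx
  obtain ⟨n, hn⟩ := hx
  refine ⟨n, ?_⟩
  have h2 : (2 * (Real.pi : ℂ) * Complex.I) ≠ 0 := by
    simp only [ne_eq, mul_eq_zero, Complex.I_ne_zero, or_false, OfNat.ofNat_ne_zero, false_or]
    exact_mod_cast Real.pi_ne_zero
  have : (x : ℂ) = (n : ℂ) := by
    refine mul_left_cancel₀ h2 ?_
    linear_combination hn
  exact_mod_cast this

lemma e_nat_mul (x : ℝ) (d : ℕ) : e (x * d) = e x ^ d := by
  rw [e, e, ← Complex.exp_nat_mul]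
  congr 1; push_cast; ring

lemma Sq_mul_add {q : ℕ} (hq : 2 ≤ q) (m d : ℕ) (hd : d < q) :
    Sq q (m * q + d) = d + Sq q m := by
  rcases Nat.eq_zero_or_pos (m * q + d) with h0 | h0
  · have hm : m = 0 := by
      rcases Nat.add_eq_zero.mp h0 with ⟨h1, -⟩
      exact (Nat.mul_eq_zero.mp h1).resolve_right (by omega)
    have hd0 : d = 0 := by omega
    simp [hm, hd0, Sq]
  · have h1 : 1 < q := hq
    rw [Sq, Nat.digits_def' h1 h0]
    have hmod : (m * q + d) % q = d :=
      by rw [Nat.mul_add_mod']; exact Nat.mod_eq_of_lt hd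
    have hdiv : (m * q + d) / q = m := by
      rw [mul_comm, Nat.mul_add_div (by omega : 0 < q), Nat.div_eq_of_lt hd]; omega
    rw [hmod, hdiv, List.sum_cons, Sq]
/-- The factor function. -/
def gfun (q : ℕ) (α : ℝ) (t : ℝ) : ℝ :=
  ‖∑ d ∈ Finset.range q, e ((t + α) * d)‖

lemma gfun_nonneg (q : ℕ) (α t : ℝ) : 0 ≤ gfun q α t := norm_nonneg _

lemma gfun_le (q : ℕ) (α t : ℝ) : gfun q α t ≤ q := by
  calc ‖∑ d ∈ Finset.range q, e ((t + α) * d)‖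
      ≤ ∑ d ∈ Finset.range q, ‖e ((t + α) * d)‖ :=
        norm_sum_le _ _
    _ = ∑ d ∈ Finset.range q, (1 : ℝ) := by simp [abs_e]
    _ = q := by simp

lemma abs_one_add_lt {z : ℂ} (hz : ‖z‖ = 1) (hz1 : z ≠ 1) :
    ‖1 + z‖ < 2 := by
  have hre : z.re ≤ 1 := by
    calc z.re ≤ ‖z‖ := Complex.re_le_norm z
      _ = 1 := hz
  have hnormSq : z.re ^ 2 + z.im ^ 2 = 1 := by
    have := Complex.sq_norm z
    rw [hz] at this
    simpa [Complex.normSq_apply, sq] using this.symm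
  have hre' : z.re < 1 := by
    rcases lt_or_eq_of_le hre with h | h
    · exact h
    · exfalso
      have him : z.im = 0 := by nlinarith
      exact hz1 (Complex.ext (by simp [← h]) (by simp [him]))
  have hsq : ‖1 + z‖ ^ 2 = 2 + 2 * z.re := by
    rw [Complex.sq_norm, Complex.normSq_apply]
    simp only [Complex.add_re, Complex.add_im, Complex.one_re, Complex.one_im]
    nlinarith
  nlinarith [norm_nonneg (1 + z)]

lemma gfun_lt {q : ℕ} (hq : 2 ≤ q) {α t : ℝ} (h : ∀ n : ℤ, t + α ≠ n) :
    gfun q α t < q := by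
  set z := e (t + α) with hzdef
  have hsum : ∀ d : ℕ, e ((t + α) * d) = z ^ d := fun d => e_nat_mul _ d
  have habsz : ‖z‖ = 1 := abs_e _
  have hz1 : z ≠ 1 := by
    intro hc
    obtain ⟨n, hn⟩ := e_eq_one hc
    exact h n hn
  have hsplit : ∑ d ∈ Finset.range q, e ((t + α) * d)
      = (1 + z) + ∑ d ∈ Finset.Ico 2 q, z ^ d := by
    simp only [hsum]
    rw [Finset.range_eq_Ico, ← Finset.sum_Ico_consecutive _ (by omega : 0 ≤ 2) (by omega : 2 ≤ q)]
    congr 1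
    rw [← Finset.range_eq_Ico]
    simp [Finset.sum_range_succ]
  rw [gfun, hsplit]
  have h1 : ‖(1 + z) + ∑ d ∈ Finset.Ico 2 q, z ^ d‖
      ≤ ‖1 + z‖ + ∑ d ∈ Finset.Ico 2 q, ‖z ^ d‖ :=
    le_trans (norm_add_le _ _) (by gcongr; exact norm_sum_le _ _)
  have h2 : ∑ d ∈ Finset.Ico 2 q, ‖z ^ d‖ = (q : ℝ) - 2 := by
    have : ∀ d ∈ Finset.Ico 2 q, ‖z ^ d‖ = 1 := by
      intro d _; rw [norm_pow, habsz, one_pow]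
    rw [Finset.sum_congr rfl this, Finset.sum_const, Nat.card_Ico, nsmul_eq_mul, mul_one]
    have : (2 : ℕ) ≤ q := hq
    push_cast [Nat.cast_sub this]
    ring
  have h3 : ‖1 + z‖ < 2 := abs_one_add_lt habsz hz1
  calc ‖(1 + z) + ∑ d ∈ Finset.Ico 2 q, z ^ d‖
      ≤ ‖1 + z‖ + ((q : ℝ) - 2) := by rw [← h2]; exact h1
    _ < 2 + ((q : ℝ) - 2) := by linarith
    _ = q := by ring

lemma gfun_continuous (q : ℕ) (α : ℝ) : Continuous (gfun q α) := by
  apply continuous_norm.comp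
  apply continuous_finset_sum
  intro d _
  unfold e
  apply Complex.continuous_exp.comp
  have : Continuous fun t : ℝ => ((t + α) * d : ℝ) := by continuity
  exact continuous_const.mul (Complex.continuous_ofReal.comp this)

lemma gfun_add_int (q : ℕ) (α : ℝ) (t : ℝ) (n : ℤ) : gfun q α (t + n) = gfun q α t := by
  unfold gfun
  congr 1
  apply Finset.sum_congr rfl
  intro d _
  have : ((t + n + α) * d : ℝ) = (t + α) * d + ((n * d : ℤ) : ℝ) := by push_cast; ring
  rw [this, e_add, e_int, mul_one]
/-- The exponential sum. -/
def T (q : ℕ) (α a : ℝ) (N : ℕ) : ℂ :=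
  ∑ n ∈ Finset.range N, e (a * n + α * Sq q n)

lemma sum_range_mul (F : ℕ → ℂ) (q : ℕ) : ∀ M : ℕ,
    ∑ n ∈ Finset.range (M * q), F n
      = ∑ m ∈ Finset.range M, ∑ d ∈ Finset.range q, F (m * q + d) := by
  intro M
  induction M with
  | zero => simp
  | succ M ih =>
    rw [Finset.sum_range_succ, ← ih]
    have h1 : (M + 1) * q = M * q + q := by ring
    rw [h1, Finset.range_eq_Ico,
      ← Finset.sum_Ico_consecutive _ (Nat.zero_le (M * q)) (Nat.le_add_right (M * q) q)]
    congr 1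
    all_goals simp [Finset.sum_Ico_eq_sum_range]

lemma key_rec {q : ℕ} (hq : 2 ≤ q) (α a : ℝ) (N : ℕ) :
    ‖T q α a N‖
      ≤ gfun q α a * ‖T q α (q * a) (N / q)‖ + q := by
  set M := N / q with hM
  have hMq : M * q ≤ N := by rw [hM]; exact Nat.div_mul_le_self N q
  have hsplit : T q α a N
      = ∑ n ∈ Finset.range (M * q), e (a * n + α * Sq q n)
        + ∑ n ∈ Finset.Ico (M * q) N, e (a * n + α * Sq q n) := by
    rw [T, Finset.range_eq_Ico,
      ← Finset.sum_Ico_consecutive _ (Nat.zero_le _) hMq]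
    rw [Finset.range_eq_Ico]
  have hmain : ∑ n ∈ Finset.range (M * q), e (a * n + α * Sq q n)
      = (∑ d ∈ Finset.range q, e ((a + α) * d)) * T q α (q * a) M := by
    rw [sum_range_mul]
    rw [T, Finset.mul_sum]
    apply Finset.sum_congr rfl
    intro m _
    rw [Finset.sum_mul]
    apply Finset.sum_congr rfl
    intro d hd
    rw [← e_add]
    congr 1
    rw [Sq_mul_add hq m d (Finset.mem_range.mp hd)]
    push_cast
    ring
  have htail : ‖∑ n ∈ Finset.Ico (M * q) N, e (a * n + α * Sq q n)‖ ≤ q := by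
    calc ‖∑ n ∈ Finset.Ico (M * q) N, e (a * n + α * Sq q n)‖
        ≤ ∑ n ∈ Finset.Ico (M * q) N, ‖e (a * n + α * Sq q n)‖ :=
          norm_sum_le _ _
      _ = ∑ n ∈ Finset.Ico (M * q) N, (1 : ℝ) := by simp [abs_e]
      _ = ((N - M * q : ℕ) : ℝ) := by rw [Finset.sum_const, Nat.card_Ico]; simp
      _ ≤ q := by
          have h1 : M * q + N % q = N := by rw [hM, mul_comm]; exact Nat.div_add_mod N q
          have h2 : N % q < q := Nat.mod_lt _ (by omega)
          have h4 : N ≤ q + M * q := by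
            calc N = M * q + N % q := h1.symm
              _ ≤ M * q + q := Nat.add_le_add_left h2.le _
              _ = q + M * q := add_comm _ _
          have h5 : N - M * q ≤ q := Nat.sub_le_iff_le_add.mpr h4
          exact_mod_cast h5
  calc ‖T q α a N‖
      ≤ ‖∑ n ∈ Finset.range (M * q), e (a * n + α * Sq q n)‖
        + ‖∑ n ∈ Finset.Ico (M * q) N, e (a * n + α * Sq q n)‖ := by
        rw [hsplit]; exact norm_add_le _ _
    _ ≤ gfun q α a * ‖T q α (q * a) M‖ + q := by
        rw [hmain, norm_mul]
        exact add_le_add_right htail _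
/-- **Gel'fond's estimate.** -/
theorem gelfond_estimate (q m₁ k₁ : ℕ) (hq : 2 ≤ q) (hm₁ : 2 ≤ m₁)
    (hk₁ : 1 ≤ k₁) (hk₁' : k₁ < m₁) (hgcd : Nat.gcd m₁ (q - 1) = 1) :
    ∃ δ₁ > (0 : ℝ), ∃ C > (0 : ℝ), ∀ a : ℝ, ∀ N : ℕ, 0 < N →
      ‖∑ n ∈ Finset.range N,
          e (a * n + ((k₁ : ℝ) / m₁) * Sq q n)‖ ≤ C * (N : ℝ) ^ (1 - δ₁) := by
  set α : ℝ := (k₁ : ℝ) / m₁ with hα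
  have hq2 : (2 : ℝ) ≤ q := by exact_mod_cast hq
  have hq0 : (0 : ℝ) < q := by linarith
  set h : ℝ → ℝ := fun t => gfun q α t * gfun q α (q * t) with hh
  have hgc : Continuous (gfun q α) := gfun_continuous q α
  have hhc : Continuous h := hgc.mul (hgc.comp (continuous_const.mul continuous_id))
  obtain ⟨t₀, ht₀, hmax⟩ := isCompact_Icc.exists_isMaxOn
    (Set.nonempty_Icc.mpr (zero_le_one : (0:ℝ) ≤ 1)) hhc.continuousOn
  have hall : ∀ t, h t ≤ h t₀ := by
    intro t
    have hfr : h (Int.fract t) = h t := by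
      have h₁ : Int.fract t = t + ((-⌊t⌋ : ℤ) : ℝ) := by
        rw [Int.fract]; push_cast; ring
      show gfun q α (Int.fract t) * gfun q α (q * Int.fract t)
          = gfun q α t * gfun q α (q * t)
      rw [h₁, gfun_add_int]
      congr 1
      have h₂ : (q : ℝ) * (t + ((-⌊t⌋ : ℤ) : ℝ))
          = q * t + (((-(q : ℤ) * ⌊t⌋) : ℤ) : ℝ) := by push_cast; ring
      rw [h₂, gfun_add_int]
    rw [← hfr]
    exact hmax ⟨Int.fract_nonneg t, (Int.fract_lt_one t).le⟩
  -- the contradiction from both arguments being integral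
  have hcontra : ∀ n₁ n₂ : ℤ, t₀ + α = n₁ → q * t₀ + α = n₂ → False := by
    intro n₁ n₂ e₁ e₂
    have hstep : ((q : ℝ) - 1) * α = (q : ℝ) * n₁ - n₂ := by
      linear_combination (q : ℝ) * e₁ - e₂
    have hm0 : (m₁ : ℝ) ≠ 0 := by positivity
    have hreal : (((q - 1 : ℕ) : ℝ)) * k₁ = ((q : ℝ) * n₁ - n₂) * m₁ := by
      rw [Nat.cast_sub (by omega : 1 ≤ q), Nat.cast_one]
      rw [hα] at hstep
      field_simp at hstep
      linarith
    have hint : ((q - 1 : ℕ) : ℤ) * k₁ = ((q : ℤ) * n₁ - n₂) * m₁ := by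
      exact_mod_cast hreal
    have hdvd : (m₁ : ℤ) ∣ ((q - 1 : ℕ) : ℤ) * k₁ := ⟨(q : ℤ) * n₁ - n₂, by linarith⟩
    have hdvdn : m₁ ∣ (q - 1) * k₁ := by exact_mod_cast hdvd
    have hdk : m₁ ∣ k₁ := (Nat.Coprime.dvd_of_dvd_mul_left hgcd hdvdn)
    have := Nat.le_of_dvd (by omega) hdk
    omega
  have hstrict : h t₀ < (q : ℝ) * q := by
    by_cases hc : ∀ n : ℤ, t₀ + α ≠ n
    · have h1 : gfun q α t₀ < q := gfun_lt hq hc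
      have h2 : gfun q α (q * t₀) ≤ q := gfun_le q α _
      have h3 : 0 ≤ gfun q α (q * t₀) := gfun_nonneg q α _
      have h4 : 0 ≤ gfun q α t₀ := gfun_nonneg q α _
      show gfun q α t₀ * gfun q α (q * t₀) < (q : ℝ) * q
      nlinarith
    · push_neg at hc
      obtain ⟨n₁, hn₁⟩ := hc
      have hc2 : ∀ n : ℤ, q * t₀ + α ≠ n := fun n hn => hcontra n₁ n hn₁ hn
      have h1 : gfun q α (q * t₀) < q := gfun_lt hq hc2
      have h2 : gfun q α t₀ ≤ q := gfun_le q α _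
      have h3 : 0 ≤ gfun q α (q * t₀) := gfun_nonneg q α _
      have h4 : 0 ≤ gfun q α t₀ := gfun_nonneg q α _
      show gfun q α t₀ * gfun q α (q * t₀) < (q : ℝ) * q
      nlinarith
  set B : ℝ := max (h t₀) 1 with hBdef
  have hB1 : 1 ≤ B := le_max_right _ _
  have hB0 : (0 : ℝ) < B := lt_of_lt_of_le one_pos hB1
  have hBq : B < (q : ℝ) * q := max_lt hstrict (by nlinarith)
  have hBall : ∀ t, gfun q α t * gfun q α (q * t) ≤ B := fun t =>
    le_trans (hall t) (le_max_left _ _)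
  -- logarithms and exponents
  have hLq : 0 < Real.log q := Real.log_pos (by linarith)
  have hLB0 : 0 ≤ Real.log B := Real.log_nonneg hB1
  have hLB : Real.log B < 2 * Real.log q := by
    have hl := Real.log_lt_log hB0 hBq
    rw [Real.log_mul (by linarith) (by linarith)] at hl
    linarith
  set θ : ℝ := (Real.log B / Real.log q + 2) / 4 with hθdef
  have hratio0 : 0 ≤ Real.log B / Real.log q := div_nonneg hLB0 hLq.le
  have hratio2 : Real.log B / Real.log q < 2 := (div_lt_iff₀ hLq).mpr (by linarith)
  have hθl : 1 / 2 ≤ θ := by rw [hθdef]; linarith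
  have hθu : θ < 1 := by rw [hθdef]; linarith
  have hθ0 : 0 < θ := by linarith
  have hqpow : (0 : ℝ) < (q : ℝ) ^ (2 * θ) := Real.rpow_pos_of_pos hq0 _
  set r : ℝ := B / (q : ℝ) ^ (2 * θ) with hrdef
  have hr0 : 0 ≤ r := div_nonneg hB0.le hqpow.le
  have hr1 : r < 1 := by
    rw [hrdef, div_lt_one hqpow]
    calc B = Real.exp (Real.log B) := (Real.exp_log hB0).symm
      _ < Real.exp (Real.log q * (2 * θ)) := by
          apply Real.exp_lt_exp.mpr
          have hexp : Real.log q * (2 * θ) = (Real.log B + 2 * Real.log q) / 2 := by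
            rw [hθdef]; field_simp; ring
          rw [hexp]; linarith
      _ = (q : ℝ) ^ (2 * θ) := (Real.rpow_def_of_pos hq0 _).symm
  set C : ℝ := ((q : ℝ) * q + q) / (1 - r) with hCdef
  have hC0 : (0 : ℝ) < C := div_pos (by nlinarith) (by linarith)
  have hCr : C * (1 - r) = (q : ℝ) * q + q := div_mul_cancel₀ _ (by linarith)
  -- main induction
  have main : ∀ N : ℕ, ∀ a : ℝ, ‖T q α a N‖ ≤ C * (N : ℝ) ^ θ := by
    intro N
    induction N using Nat.strong_induction_on with
    | _ N ih =>
      intro a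
      rcases Nat.eq_zero_or_pos N with rfl | hN
      · simp [T, Real.zero_rpow (ne_of_gt hθ0)]
      · have h1 := key_rec hq α a N
        have h2 := key_rec hq α (q * a) (N / q)
        rw [Nat.div_div_eq_div_mul N q q] at h2
        have hqq1 : 1 < q * q := by nlinarith
        have hlt : N / (q * q) < N := Nat.div_lt_self hN hqq1
        have ih2 := ih _ hlt (q * (q * a))
        have hg0 : 0 ≤ gfun q α a := gfun_nonneg q α a
        have hgq : gfun q α a ≤ q := gfun_le q α a
        have hg0' : 0 ≤ gfun q α (q * a) := gfun_nonneg q α _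
        have hprod : gfun q α a * gfun q α (q * a) ≤ B := hBall a
        have habs0 : 0 ≤ ‖T q α (q * (q * a)) (N / (q * q))‖ :=
          norm_nonneg _
        have hA : ‖T q α a N‖
            ≤ B * (C * ((N / (q * q) : ℕ) : ℝ) ^ θ) + ((q : ℝ) * q + q) := by
          calc ‖T q α a N‖
              ≤ gfun q α a * ‖T q α (q * a) (N / q)‖ + q := h1
            _ ≤ gfun q α a * (gfun q α (q * a)
                  * ‖T q α (q * (q * a)) (N / (q * q))‖ + q) + q := by
                have := mul_le_mul_of_nonneg_left h2 hg0
                linarith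
            _ = (gfun q α a * gfun q α (q * a))
                  * ‖T q α (q * (q * a)) (N / (q * q))‖
                  + gfun q α a * q + q := by ring
            _ ≤ B * ‖T q α (q * (q * a)) (N / (q * q))‖
                  + (q : ℝ) * q + q := by
                have e1 := mul_le_mul_of_nonneg_right hprod habs0
                have e2 := mul_le_mul_of_nonneg_right hgq hq0.le
                linarith
            _ ≤ B * (C * ((N / (q * q) : ℕ) : ℝ) ^ θ) + ((q : ℝ) * q + q) := by
                have := mul_le_mul_of_nonneg_left ih2 hB0.le
                linarith
        have hfloor : ((N / (q * q) : ℕ) : ℝ) ≤ (N : ℝ) / ((q : ℝ) * q) := by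
          have hc := Nat.cast_div_le (α := ℝ) (m := N) (n := q * q)
          push_cast at hc
          exact hc
        have hrpow : ((N / (q * q) : ℕ) : ℝ) ^ θ ≤ (N : ℝ) ^ θ / (q : ℝ) ^ (2 * θ) := by
          calc ((N / (q * q) : ℕ) : ℝ) ^ θ
              ≤ ((N : ℝ) / ((q : ℝ) * q)) ^ θ :=
                Real.rpow_le_rpow (Nat.cast_nonneg _) hfloor hθ0.le
            _ = (N : ℝ) ^ θ / ((q : ℝ) * q) ^ θ :=
                Real.div_rpow (Nat.cast_nonneg N) (mul_nonneg hq0.le hq0.le) θ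
            _ = (N : ℝ) ^ θ / (q : ℝ) ^ (2 * θ) := by
                rw [show ((q : ℝ) * q) = (q : ℝ) ^ (2 : ℕ) by ring,
                  ← Real.rpow_natCast (q : ℝ) 2, ← Real.rpow_mul hq0.le]
                norm_num
        have hBr : B * ((N : ℝ) ^ θ / (q : ℝ) ^ (2 * θ)) = r * (N : ℝ) ^ θ := by
          rw [hrdef, div_mul_eq_mul_div, ← mul_div_assoc]
        have hNθ : 1 ≤ (N : ℝ) ^ θ :=
          Real.one_le_rpow (by exact_mod_cast hN) hθ0.le
        have e1 : B * (C * ((N / (q * q) : ℕ) : ℝ) ^ θ) ≤ C * (r * (N : ℝ) ^ θ) := by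
          calc B * (C * ((N / (q * q) : ℕ) : ℝ) ^ θ)
              = C * B * ((N / (q * q) : ℕ) : ℝ) ^ θ := by ring
            _ ≤ C * B * ((N : ℝ) ^ θ / (q : ℝ) ^ (2 * θ)) :=
                mul_le_mul_of_nonneg_left hrpow (mul_nonneg hC0.le hB0.le)
            _ = C * (r * (N : ℝ) ^ θ) := by rw [mul_assoc, hBr]
        have e2 : (q : ℝ) * q + q ≤ C * ((1 - r) * (N : ℝ) ^ θ) := by
          calc (q : ℝ) * q + q = C * (1 - r) * 1 := by rw [hCr, mul_one]
            _ ≤ C * (1 - r) * (N : ℝ) ^ θ :=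
                mul_le_mul_of_nonneg_left hNθ (mul_nonneg hC0.le (by linarith))
            _ = C * ((1 - r) * (N : ℝ) ^ θ) := mul_assoc _ _ _
        calc ‖T q α a N‖
            ≤ B * (C * ((N / (q * q) : ℕ) : ℝ) ^ θ) + ((q : ℝ) * q + q) := hA
          _ ≤ C * (r * (N : ℝ) ^ θ) + C * ((1 - r) * (N : ℝ) ^ θ) := add_le_add e1 e2
          _ = C * (N : ℝ) ^ θ := by ring
  refine ⟨1 - θ, by linarith, C, hC0, ?_⟩
  intro a N _
  have hmain := main N a
  have hexp : (1 : ℝ) - (1 - θ) = θ := by ring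
  rw [hexp]
  exact hmain

end
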